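/- Let β_1, β_2, β_3 be the three distinct real roots of P(r) = r^3 + 2 u_s r^2 + (u_s^2 - b ρ_s - μ/(κ ρ_s)) r - μ u_s/(κ ρ_s), and for each j set ω_j = (b ρ_s - u_s^2 - 2 u_s β_j - β_j^2)/(κ P'(β_j)). Then for j ≠ l with {j,l,p} = {1,2,3}, ω_j - ω_l = (β_j - β_l)/(κ P'(β_j) P'(β_l)) · [ 2 μ u_s^2/(κ ρ_s β_p) + β_p (2 b ρ_s - 2 u_s^2 - μ/(κ ρ_s)) + 2 u_s (b ρ_s - u_s^2) ]. -/

import Mathlib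

lemma aux4 (us κ B m x y z : ℝ) (hκ : κ ≠ 0) (hz : z ≠ 0)
    (hsum : x + y + z = -(2*us))
    (hpair : x*y + x*z + y*z = us^2 - B - m)
    (hprod : x*y*z = m*us)
    (hPx : 3*x^2 + 4*us*x + us^2 - B - m ≠ 0)
    (hPy : 3*y^2 + 4*us*y + us^2 - B - m ≠ 0) :
    (B - us^2 - 2*us*x - x^2) / (κ * (3*x^2 + 4*us*x + us^2 - B - m))
      - (B - us^2 - 2*us*y - y^2) / (κ * (3*y^2 + 4*us*y + us^2 - B - m))
      = (x - y) / (κ * (3*x^2 + 4*us*x + us^2 - B - m)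
               * (3*y^2 + 4*us*y + us^2 - B - m))
        * (2*m*us^2/z + z*(2*B - 2*us^2 - m) + 2*us*(B - us^2)) := by
  have hE : 2*m*us^2/z = 2*us*(x*y) := by
    rw [div_eq_iff hz]
    linear_combination (-2*us)*hprod
  rw [hE]
  have hB : B = us^2 - m - (x*y + x*z + y*z) := by linarith
  subst hB
  have hz' : z = -(2*us) - x - y := by linarith
  subst hz'
  rw [div_sub_div _ _ (mul_ne_zero hκ hPx) (mul_ne_zero hκ hPy), div_mul_eq_mul_div,
    div_eq_div_iff (mul_ne_zero (mul_ne_zero hκ hPx) (mul_ne_zero hκ hPy))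
      (mul_ne_zero (mul_ne_zero hκ hPx) hPy)]
  ring

/-- Difference formula for the `ω_j` attached to the three distinct real roots of `P`. -/
theorem stmt_4 (us ρs b μ κ : ℝ) (hus : 0 < us) (hρs : 0 < ρs) (hb : 0 < b)
    (hμ : 0 < μ) (hκ : 0 < κ)
    (β : Fin 3 → ℝ) (hinj : Function.Injective β)
    (hsum : β 0 + β 1 + β 2 = -(2*us))
    (hpair : β 0 * β 1 + β 0 * β 2 + β 1 * β 2 = us^2 - b*ρs - μ/(κ*ρs))
    (hprod : β 0 * β 1 * β 2 = μ*us/(κ*ρs))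
    (j l p : Fin 3) (hjl : j ≠ l) (hjp : j ≠ p) (hlp : l ≠ p)
    (hβp : β p ≠ 0)
    (hPj : 3*(β j)^2 + 4*us*(β j) + us^2 - b*ρs - μ/(κ*ρs) ≠ 0)
    (hPl : 3*(β l)^2 + 4*us*(β l) + us^2 - b*ρs - μ/(κ*ρs) ≠ 0) :
    (b*ρs - us^2 - 2*us*(β j) - (β j)^2)
        / (κ * (3*(β j)^2 + 4*us*(β j) + us^2 - b*ρs - μ/(κ*ρs)))
      - (b*ρs - us^2 - 2*us*(β l) - (β l)^2)
        / (κ * (3*(β l)^2 + 4*us*(β l) + us^2 - b*ρs - μ/(κ*ρs)))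
      = (β j - β l)
          / (κ * (3*(β j)^2 + 4*us*(β j) + us^2 - b*ρs - μ/(κ*ρs))
               * (3*(β l)^2 + 4*us*(β l) + us^2 - b*ρs - μ/(κ*ρs)))
        * (2*μ*us^2/(κ*ρs*(β p)) + (β p)*(2*b*ρs - 2*us^2 - μ/(κ*ρs))
            + 2*us*(b*ρs - us^2)) := by
  obtain ⟨h1, h2, h3⟩ :
      β j + β l + β p = -(2*us) ∧
      β j * β l + β j * β p + β l * β p = us^2 - b*ρs - μ/(κ*ρs) ∧
      β j * β l * β p = μ*us/(κ*ρs) := by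
    fin_cases j <;> fin_cases l <;> fin_cases p <;>
      first
        | exact absurd rfl hjl
        | exact absurd rfl hjp
        | exact absurd rfl hlp
        | (simp only [show ((⟨0, by omega⟩ : Fin 3) : Fin 3) = 0 from rfl,
              show ((⟨1, by omega⟩ : Fin 3) : Fin 3) = 1 from rfl,
              show ((⟨2, by omega⟩ : Fin 3) : Fin 3) = 2 from rfl]
           exact ⟨by linear_combination hsum, by linear_combination hpair,
             by linear_combination hprod⟩)
  have key := aux4 us κ (b*ρs) (μ/(κ*ρs)) (β j) (β l) (β p) (ne_of_gt hκ) hβp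
    h1 h2 (by linear_combination h3) hPj hPl
  linear_combination key
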